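/- arXiv:2403.06615 — 7 statements merged into one kernel-verified Lean document; each statement's English description precedes it below -/
import Mathlib

section
/- Let V be a linear subspace of ℝⁿ and φ : ℝⁿ → ℝ twice continuously differentiable. If for every x ∈ ℝⁿ the Hessian ∇²φ(x) maps V into V, then φ(x) + φ(0) = φ(P_V x) + φ(P_{V⊥} x) for all x ∈ ℝⁿ, where P_V and P_{V⊥} denote the orthogonal projections onto V and its orthogonal complement. -/
open MeasureTheory InnerProductSpace

/-- If `φ` is C², and the Hessian of `φ` at every point maps the subspace `V`
into `V`, then `φ(x) + φ(0) = φ(P_V x) + φ(P_{V⊥} x)` for all `x`. -/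
theorem hessian_invariant_implies_splits {n : ℕ}
    (V : Submodule ℝ (EuclideanSpace ℝ (Fin n)))
    (φ : EuclideanSpace ℝ (Fin n) → ℝ)
    (hφ : ContDiff ℝ 2 φ)
    (hHess : ∀ x : EuclideanSpace ℝ (Fin n), ∀ v ∈ V, fderiv ℝ (gradient φ) x v ∈ V) :
    ∀ x : EuclideanSpace ℝ (Fin n),
      φ x + φ 0 = φ (Submodule.orthogonalProjection V x) + φ (Submodule.orthogonalProjection Vᗮ x) := by
  -- the gradient is C¹, hence differentiable
  have hgrad : ContDiff ℝ 1 (gradient φ) := by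
    have h1 : ContDiff ℝ 1 (fderiv ℝ φ) := hφ.fderiv_right (by norm_num)
    exact ((InnerProductSpace.toDual ℝ (EuclideanSpace ℝ (Fin n))).symm.contDiff).comp h1
  have hφd : Differentiable ℝ φ := hφ.differentiable (by norm_num)
  -- fderiv in terms of the gradient
  have hfd : ∀ (y v : EuclideanSpace ℝ (Fin n)), fderiv ℝ φ y v = inner ℝ (gradient φ y) v := by
    intro y v
    have : InnerProductSpace.toDual ℝ (EuclideanSpace ℝ (Fin n)) (gradient φ y) = fderiv ℝ φ y :=
      (InnerProductSpace.toDual ℝ (EuclideanSpace ℝ (Fin n))).apply_symm_apply _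
    rw [← this, InnerProductSpace.toDual_apply_apply]
  intro x
  set a : EuclideanSpace ℝ (Fin n) := (Submodule.orthogonalProjection V x : EuclideanSpace ℝ (Fin n)) with ha_def
  set b : EuclideanSpace ℝ (Fin n) := (Submodule.orthogonalProjection Vᗮ x : EuclideanSpace ℝ (Fin n)) with hb_def
  have ha : a ∈ V := (Submodule.orthogonalProjection V x).2
  have hb : b ∈ Vᗮ := (Submodule.orthogonalProjection Vᗮ x).2
  have hx : x = a + b := ((V.starProjection_add_starProjection_orthogonal x).symm)
  -- key step A: the directional derivative ⟪∇φ(·), b⟫ is invariant under translation by a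
  have keyA : ∀ c : EuclideanSpace ℝ (Fin n), (inner ℝ (gradient φ (a + c)) b : ℝ) = inner ℝ (gradient φ c) b := by
    intro c
    have hg : ∀ u : ℝ, HasDerivAt (fun u : ℝ => (inner ℝ (gradient φ (u • a + c)) b : ℝ)) 0 u := by
      intro u
      have hline : HasDerivAt (fun u : ℝ => u • a + c) a u := by
        simpa using ((hasDerivAt_id u).smul_const a).add_const c
      have hgd : HasFDerivAt (gradient φ) (fderiv ℝ (gradient φ) (u • a + c)) (u • a + c) :=
        (hgrad.differentiable one_ne_zero (u • a + c)).hasFDerivAt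
      have h1 : HasDerivAt (fun u : ℝ => gradient φ (u • a + c))
          (fderiv ℝ (gradient φ) (u • a + c) a) u := by have := hgd.comp_hasDerivAt u hline; exact this
      have h2 : HasDerivAt (fun u : ℝ => (innerSL ℝ b) (gradient φ (u • a + c)))
          ((innerSL ℝ b) (fderiv ℝ (gradient φ) (u • a + c) a)) u :=
        (innerSL ℝ b).hasFDerivAt.comp_hasDerivAt u h1
      have hzero : (innerSL ℝ b) (fderiv ℝ (gradient φ) (u • a + c) a) = 0 := by
        have hv : fderiv ℝ (gradient φ) (u • a + c) a ∈ V := hHess _ a ha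
        have := (Submodule.mem_orthogonal V b).mp hb _ hv
        rw [innerSL_apply_apply, real_inner_comm]; exact this
      rw [hzero] at h2
      have heq : (fun u : ℝ => (inner ℝ (gradient φ (u • a + c)) b : ℝ))
          = fun u : ℝ => (innerSL ℝ b) (gradient φ (u • a + c)) := by
        funext u; rw [innerSL_apply_apply, real_inner_comm]
      rw [heq]
      exact h2
    have hconst := is_const_of_deriv_eq_zero (f := fun u : ℝ =>
        (inner ℝ (gradient φ (u • a + c)) b : ℝ))
      (fun u => (hg u).differentiableAt) (fun u => (hg u).deriv) 1 0
    simpa using hconst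
  -- key step B: φ(a + s•b) - φ(s•b) is constant in s
  have keyB : φ (a + (1:ℝ) • b) - φ ((1:ℝ) • b) = φ (a + (0:ℝ) • b) - φ ((0:ℝ) • b) := by
    have hg : ∀ s : ℝ, HasDerivAt (fun s : ℝ => φ (a + s • b) - φ (s • b)) 0 s := by
      intro s
      have hline1 : HasDerivAt (fun s : ℝ => a + s • b) b s := by
        simpa using ((hasDerivAt_id s).smul_const b).const_add a
      have hline2 : HasDerivAt (fun s : ℝ => s • b) b s := by
        simpa using (hasDerivAt_id s).smul_const b
      have h1 : HasDerivAt (fun s : ℝ => φ (a + s • b)) (fderiv ℝ φ (a + s • b) b) s :=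
        (hφd (a + s • b)).hasFDerivAt.comp_hasDerivAt s hline1
      have h2 : HasDerivAt (fun s : ℝ => φ (s • b)) (fderiv ℝ φ (s • b) b) s :=
        (hφd (s • b)).hasFDerivAt.comp_hasDerivAt s hline2
      have h3 := h1.sub h2
      have : fderiv ℝ φ (a + s • b) b - fderiv ℝ φ (s • b) b = 0 := by
        rw [hfd, hfd, keyA (s • b)]; ring
      rwa [this] at h3
    exact is_const_of_deriv_eq_zero (f := fun s : ℝ => φ (a + s • b) - φ (s • b))
      (fun s => (hg s).differentiableAt) (fun s => (hg s).deriv) 1 0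
  simp only [one_smul, zero_smul, add_zero] at keyB
  rw [hx]
  have : φ (a + b) - φ b = φ a - φ 0 := keyB
  linarith
end

section
/- Let V be a linear subspace of ℝⁿ and φ : ℝⁿ → ℝ twice differentiable. If φ(x) + φ(0) = φ(P_V x) + φ(P_{V⊥} x) for all x ∈ ℝⁿ, then for every x ∈ ℝⁿ the Hessian ∇²φ(x) maps V into V. -/
open MeasureTheory InnerProductSpace

/-- If `φ` is twice differentiable and
`φ(x) + φ(0) = φ(P_V x) + φ(P_{V⊥} x)` for all `x`, then the Hessian of `φ` at every point
maps `V` into `V`. -/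
theorem splits_implies_hessian_invariant {n : ℕ}
    (V : Submodule ℝ (EuclideanSpace ℝ (Fin n)))
    (φ : EuclideanSpace ℝ (Fin n) → ℝ)
    (hφ : Differentiable ℝ φ) (hφ' : Differentiable ℝ (gradient φ))
    (hsplit : ∀ x : EuclideanSpace ℝ (Fin n),
      φ x + φ 0 = φ (V.orthogonalProjectionOnto x) + φ (Vᗮ.orthogonalProjectionOnto x)) :
    ∀ x : EuclideanSpace ℝ (Fin n), ∀ v ∈ V, fderiv ℝ (gradient φ) x v ∈ V := by
  intro x v hv
  set Pe : EuclideanSpace ℝ (Fin n) →L[ℝ] EuclideanSpace ℝ (Fin n) :=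
    V.subtypeL.comp (V.orthogonalProjectionOnto) with hPe
  set Qe : EuclideanSpace ℝ (Fin n) →L[ℝ] EuclideanSpace ℝ (Fin n) :=
    Vᗮ.subtypeL.comp (Vᗮ.orthogonalProjectionOnto) with hQe
  have hgrad : ∀ y u : EuclideanSpace ℝ (Fin n),
      inner ℝ (gradient φ y) u = fderiv ℝ φ y u := by
    intro y u; simp [gradient, InnerProductSpace.toDual_symm_apply]
  have hφeq : φ = fun y => φ (Pe y) + φ (Qe y) - φ 0 := by
    funext y
    have := hsplit y
    simp only [hPe, hQe, ContinuousLinearMap.comp_apply, Submodule.subtypeL_apply]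
    linarith
  have hQev : Qe v = 0 := by
    simp only [hQe, ContinuousLinearMap.comp_apply, Submodule.subtypeL_apply]
    rw [Submodule.orthogonalProjectionOnto_apply_of_mem_orthogonal
      (Submodule.le_orthogonal_orthogonal V hv)]
    simp
  rw [← V.orthogonal_orthogonal, Submodule.mem_orthogonal]
  intro w hw
  have hPew : Pe w = 0 := by
    simp only [hPe, ContinuousLinearMap.comp_apply, Submodule.subtypeL_apply]
    rw [Submodule.orthogonalProjectionOnto_apply_of_mem_orthogonal hw]
    simp
  have hQew : Qe w = w := by
    simp only [hQe, ContinuousLinearMap.comp_apply, Submodule.subtypeL_apply]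
    exact (Submodule.starProjection_eq_self_iff (K := Vᗮ)).mpr hw
  have key : ∀ y : EuclideanSpace ℝ (Fin n),
      inner ℝ (gradient φ y) w = (inner ℝ (gradient φ (Qe y)) w : ℝ) := by
    intro y
    rw [hgrad, hgrad]
    have hdP : DifferentiableAt ℝ (φ ∘ Pe) y :=
      hφ.differentiableAt.comp y Pe.differentiableAt
    have hdQ : DifferentiableAt ℝ (φ ∘ Qe) y :=
      hφ.differentiableAt.comp y Qe.differentiableAt
    have h1 : fderiv ℝ φ y = fderiv ℝ (fun y => (φ ∘ Pe) y + (φ ∘ Qe) y - φ 0) y := by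
      conv_lhs => rw [hφeq]
      rfl
    rw [h1, fderiv_sub_const, fderiv_fun_add hdP hdQ,
      fderiv_comp y hφ.differentiableAt Pe.differentiableAt,
      fderiv_comp y hφ.differentiableAt Qe.differentiableAt,
      Pe.fderiv, Qe.fderiv]
    simp [hPew, hQew]
  have hF : (inner ℝ w (fderiv ℝ (gradient φ) x v) : ℝ)
      = fderiv ℝ ((innerSL ℝ w) ∘ (gradient φ)) x v := by
    rw [fderiv_comp x (innerSL ℝ w).differentiableAt hφ'.differentiableAt,
      (innerSL ℝ w).fderiv]
    simp
  rw [hF]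
  have hfun : (innerSL ℝ w) ∘ (gradient φ)
      = ((innerSL ℝ w) ∘ (gradient φ)) ∘ Qe := by
    funext y
    simp only [Function.comp_apply, innerSL_apply_apply]
    rw [real_inner_comm, key y, real_inner_comm]
  rw [hfun, fderiv_comp x
      (((innerSL ℝ w).differentiableAt).comp (Qe x) hφ'.differentiableAt)
      Qe.differentiableAt,
    Qe.fderiv, ContinuousLinearMap.comp_apply, hQev, map_zero]
end

section
/- Let X be a random vector on ℝⁿ whose law μ splits along (E_i, E_i^⊥) for subspaces E₁,…,E_k (i.e., P_{E_i}X and P_{E_i^⊥}X are independent for each i), and suppose there is θ > 0 with max_i min{‖P_{E_i}x‖, ‖P_{E_i^⊥}x‖} ≥ θ‖x‖ for all x. Then for all t ≥ 0, P(‖X‖ ≥ t) ≤ k · (P(‖X‖ ≥ θt))². -/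
open MeasureTheory ProbabilityTheory
open scoped ENNReal

/-- If the law of `X` splits along `(E_i, E_i^⊥)` for each `i`
(the projections are independent), and `max_i min{‖P_{E_i}x‖, ‖P_{E_i^⊥}x‖} ≥ θ‖x‖`
pointwise for some `θ > 0`, then `P(‖X‖ ≥ t) ≤ k ⬝ P(‖X‖ ≥ θt)²` for all `t ≥ 0`. -/
theorem tail_selfmajorization_of_splitting {n k : ℕ} {Ω : Type*} [MeasurableSpace Ω]
    (μ : Measure Ω) [IsProbabilityMeasure μ]
    (X : Ω → EuclideanSpace ℝ (Fin n)) (hX : Measurable X)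
    (E : Fin k → Submodule ℝ (EuclideanSpace ℝ (Fin n)))
    (hsplit : ∀ i, IndepFun
      (fun ω => (Submodule.orthogonalProjectionOnto (E i) (X ω) : EuclideanSpace ℝ (Fin n)))
      (fun ω => (Submodule.orthogonalProjectionOnto (E i)ᗮ (X ω) : EuclideanSpace ℝ (Fin n))) μ)
    (θ : ℝ) (hθ : 0 < θ)
    (hmax : ∀ x : EuclideanSpace ℝ (Fin n), ∃ i,
      θ * ‖x‖ ≤ min ‖(Submodule.orthogonalProjectionOnto (E i) x : EuclideanSpace ℝ (Fin n))‖
                    ‖(Submodule.orthogonalProjectionOnto (E i)ᗮ x : EuclideanSpace ℝ (Fin n))‖) :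
    ∀ t : ℝ, 0 ≤ t →
      μ {ω | t ≤ ‖X ω‖} ≤ (k : ℝ≥0∞) * (μ {ω | θ * t ≤ ‖X ω‖}) ^ 2 := by
  intro t ht
  set S : Set Ω := {ω | θ * t ≤ ‖X ω‖} with hS
  set s : Set (EuclideanSpace ℝ (Fin n)) := {y | θ * t ≤ ‖y‖} with hsdef
  have hs : MeasurableSet s := by
    have : s = (fun y : EuclideanSpace ℝ (Fin n) => ‖y‖) ⁻¹' Set.Ici (θ * t) := rfl
    rw [this]
    exact measurable_norm measurableSet_Ici
  set f : Fin k → Ω → EuclideanSpace ℝ (Fin n) :=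
    fun i ω => (Submodule.orthogonalProjectionOnto (E i) (X ω) : EuclideanSpace ℝ (Fin n)) with hf
  set g : Fin k → Ω → EuclideanSpace ℝ (Fin n) :=
    fun i ω => (Submodule.orthogonalProjectionOnto (E i)ᗮ (X ω) : EuclideanSpace ℝ (Fin n)) with hg
  -- pointwise union bound
  have hsub : {ω | t ≤ ‖X ω‖} ⊆ ⋃ i, (f i ⁻¹' s ∩ g i ⁻¹' s) := by
    intro ω hω
    obtain ⟨i, hi⟩ := hmax (X ω)
    refine Set.mem_iUnion.2 ⟨i, ?_, ?_⟩
    · have : θ * t ≤ θ * ‖X ω‖ := by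
        exact mul_le_mul_of_nonneg_left hω hθ.le
      exact this.trans (hi.trans (min_le_left _ _))
    · have : θ * t ≤ θ * ‖X ω‖ := mul_le_mul_of_nonneg_left hω hθ.le
      exact this.trans (hi.trans (min_le_right _ _))
  have hnorm : ∀ (K : Submodule ℝ (EuclideanSpace ℝ (Fin n)))
      (x : EuclideanSpace ℝ (Fin n)),
      ‖(Submodule.orthogonalProjectionOnto K x : EuclideanSpace ℝ (Fin n))‖ ≤ ‖x‖ := by
    intro K x
    calc ‖(Submodule.orthogonalProjectionOnto K x : EuclideanSpace ℝ (Fin n))‖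
        ≤ ‖Submodule.orthogonalProjectionOnto K‖ * ‖x‖ := (Submodule.orthogonalProjectionOnto K).le_opNorm x
      _ ≤ 1 * ‖x‖ := mul_le_mul_of_nonneg_right (Submodule.orthogonalProjectionOnto_norm_le K) (norm_nonneg x)
      _ = ‖x‖ := one_mul _
  have hsubS : ∀ i, f i ⁻¹' s ⊆ S ∧ g i ⁻¹' s ⊆ S := by
    intro i
    constructor
    · intro ω hω
      exact le_trans hω (hnorm (E i) (X ω))
    · intro ω hω
      exact le_trans hω (hnorm (E i)ᗮ (X ω))
  calc μ {ω | t ≤ ‖X ω‖} ≤ μ (⋃ i, (f i ⁻¹' s ∩ g i ⁻¹' s)) := measure_mono hsub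
    _ ≤ ∑ i, μ (f i ⁻¹' s ∩ g i ⁻¹' s) := measure_iUnion_fintype_le _ _
    _ ≤ ∑ _i : Fin k, μ S ^ 2 := by
        refine Finset.sum_le_sum fun i _ => ?_
        rw [(hsplit i).measure_inter_preimage_eq_mul _ _ hs hs, sq]
        exact mul_le_mul' (measure_mono (hsubS i).1) (measure_mono (hsubS i).2)
    _ = (k : ℝ≥0∞) * μ S ^ 2 := by simp [Finset.sum_const, nsmul_eq_mul]
end

section
/- Let X be a nonnegative random variable such that there exist constants k ≥ 1 and θ ∈ (0,1] with P(X ≥ t) ≤ k · (P(X ≥ θt))² for all t ≥ 0. Then there exist finite constants M, α, β > 0 such that P(X ≥ t) ≤ M exp(−β t^α) for all t ≥ 0; in particular E[X] < ∞. -/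
open MeasureTheory Real Set
open scoped ENNReal

private lemma aux_integrable_exp_neg_rpow {b a : ℝ} (hb : 0 < b) (ha : 0 < a) :
    IntegrableOn (fun x : ℝ => Real.exp (-b * x ^ a)) (Set.Ioi 0) := by
  have hp : (1 : ℝ) / a ≠ 0 := by positivity
  rw [← integrableOn_Ioi_comp_rpow_iff' (fun x : ℝ => Real.exp (-b * x ^ a)) hp]
  have h1 : IntegrableOn (fun x : ℝ => x ^ ((1:ℝ)/a - 1) * Real.exp (-b * x ^ (1:ℝ)))
      (Set.Ioi 0) :=
    integrableOn_rpow_mul_exp_neg_mul_rpow (by simp; positivity) one_pos hb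
  refine h1.congr_fun (fun x hx => ?_) measurableSet_Ioi
  have hx0 : (0:ℝ) < x := hx
  rw [smul_eq_mul, ← Real.rpow_mul hx0.le, one_div_mul_cancel ha.ne', Real.rpow_one]
  simp only [Real.rpow_one]

/-- If a nonnegative random variable satisfies the self-majorization
`P(X ≥ t) ≤ k ⬝ P(X ≥ θt)²` for all `t ≥ 0` (with `k ≥ 1`, `θ ∈ (0,1]`), then its tail decays
like `M exp(−β t^α)`; in particular `E[X] < ∞`. -/
theorem tail_bound_of_selfmajorization {Ω : Type*} [MeasurableSpace Ω]
    (μ : Measure Ω) [IsProbabilityMeasure μ]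
    (X : Ω → ℝ) (hX : Measurable X) (hXnonneg : ∀ ω, 0 ≤ X ω)
    (k θ : ℝ) (hk : 1 ≤ k) (hθ0 : 0 < θ) (hθ1 : θ ≤ 1)
    (hmaj : ∀ t : ℝ, 0 ≤ t →
      μ {ω | t ≤ X ω} ≤ ENNReal.ofReal k * (μ {ω | θ * t ≤ X ω}) ^ 2) :
    (∃ M α β : ℝ, 0 < M ∧ 0 < α ∧ 0 < β ∧ ∀ t : ℝ, 0 ≤ t →
      μ {ω | t ≤ X ω} ≤ ENNReal.ofReal (M * exp (-β * t ^ α))) ∧ Integrable X μ := by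
  have hk0 : (0:ℝ) < k := lt_of_lt_of_le one_pos hk
  set θ' : ℝ := θ / 2 with hθ'def
  have hθ'0 : 0 < θ' := by positivity
  have hθ'le : θ' ≤ 1/2 := by rw [hθ'def]; linarith
  set q : ℝ → ℝ := fun t => (μ {ω | t ≤ X ω}).toReal with hqdef
  have hfin : ∀ t : ℝ, μ {ω | t ≤ X ω} ≠ ∞ := fun t => measure_ne_top μ _
  have q_nonneg : ∀ t, 0 ≤ q t := fun t => ENNReal.toReal_nonneg
  have q_le_one : ∀ t, q t ≤ 1 := by
    intro t
    have h := prob_le_one (μ := μ) (s := {ω | t ≤ X ω})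
    simpa using ENNReal.toReal_mono (by simp) h
  have q_anti : ∀ {s t : ℝ}, s ≤ t → q t ≤ q s := by
    intro s t hst
    exact ENNReal.toReal_mono (hfin s) (measure_mono (fun ω hω => le_trans hst hω))
  have hmaj' : ∀ t : ℝ, 0 ≤ t → q t ≤ k * q (θ' * t) ^ 2 := by
    intro t ht
    have h2 : μ {ω | θ * t ≤ X ω} ≤ μ {ω | θ' * t ≤ X ω} := by
      apply measure_mono
      intro ω hω
      have : θ' * t ≤ θ * t := by
        apply mul_le_mul_of_nonneg_right _ ht
        rw [hθ'def]; linarith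
      exact le_trans this hω
    have h3 : μ {ω | t ≤ X ω} ≤ ENNReal.ofReal k * (μ {ω | θ' * t ≤ X ω}) ^ 2 :=
      (hmaj t ht).trans (mul_le_mul_right (pow_le_pow_left₀ zero_le h2 2) _)
    have hne : ENNReal.ofReal k * (μ {ω | θ' * t ≤ X ω}) ^ 2 ≠ ∞ :=
      ENNReal.mul_ne_top ENNReal.ofReal_ne_top (ENNReal.pow_ne_top (hfin _))
    have h4 := ENNReal.toReal_mono hne h3
    rwa [ENNReal.toReal_mul, ENNReal.toReal_pow, ENNReal.toReal_ofReal hk0.le] at h4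
  -- find a point where the tail is at most 1/(2k)
  obtain ⟨N, hN⟩ : ∃ N : ℕ, μ {ω | (N:ℝ) ≤ X ω} < ENNReal.ofReal (1/(2*k)) := by
    have h0 : ⋂ n : ℕ, {ω | (n:ℝ) ≤ X ω} = (∅ : Set Ω) := by
      ext ω
      simp only [Set.mem_iInter, Set.mem_setOf_eq, Set.mem_empty_iff_false, iff_false, not_forall]
      obtain ⟨n, hn⟩ := exists_nat_gt (X ω)
      exact ⟨n, not_le.mpr hn⟩
    have htend : Filter.Tendsto (fun n : ℕ => μ {ω | (n:ℝ) ≤ X ω}) Filter.atTop (nhds 0) := by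
      have h := tendsto_measure_iInter_atTop (μ := μ) (s := fun n : ℕ => {ω | (n:ℝ) ≤ X ω})
        (fun n => (hX measurableSet_Ici).nullMeasurableSet)
        (fun m n hmn => Set.setOf_subset_setOf.mpr
          (fun ω hω => le_trans (show (m:ℝ) ≤ (n:ℝ) by exact_mod_cast hmn) hω))
        ⟨0, measure_ne_top μ _⟩
      rwa [h0, measure_empty] at h
    have hpos : (0:ℝ≥0∞) < ENNReal.ofReal (1/(2*k)) := ENNReal.ofReal_pos.mpr (by positivity)
    exact ((htend.eventually_lt_const hpos).exists)
  set s₀ : ℝ := (N:ℝ) + 1 with hs₀def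
  have hs₀1 : (1:ℝ) ≤ s₀ := by
    rw [hs₀def]
    have : (0:ℝ) ≤ (N:ℝ) := Nat.cast_nonneg N
    linarith
  have hs₀pos : (0:ℝ) < s₀ := lt_of_lt_of_le one_pos hs₀1
  have hqs₀ : q s₀ ≤ 1/(2*k) := by
    have h1 : q s₀ ≤ q (N:ℝ) := q_anti (by rw [hs₀def]; linarith)
    have h2 : q (N:ℝ) ≤ 1/(2*k) := by
      have := ENNReal.toReal_mono ENNReal.ofReal_ne_top hN.le
      rwa [ENNReal.toReal_ofReal (by positivity)] at this
    linarith
  -- the iterated bound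
  have claim : ∀ n : ℕ, ∀ t : ℝ, s₀ ≤ t → k * q (t / θ' ^ n) ≤ (1/2 : ℝ) ^ (2 ^ n) := by
    intro n
    induction n with
    | zero =>
      intro t ht
      simp only [pow_zero, div_one, pow_one]
      have h1 : q t ≤ 1/(2*k) := le_trans (q_anti ht) hqs₀
      calc k * q t ≤ k * (1/(2*k)) := mul_le_mul_of_nonneg_left h1 hk0.le
        _ = 1/2 := by field_simp
    | succ n ih =>
      intro t ht
      have ht0 : 0 < t := lt_of_lt_of_le hs₀pos ht
      have hpos : (0:ℝ) ≤ t / θ' ^ (n+1) := by positivity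
      have h1 := hmaj' (t / θ' ^ (n+1)) hpos
      have heq : θ' * (t / θ' ^ (n+1)) = t / θ' ^ n := by
        field_simp
        ring
      rw [heq] at h1
      have h2 : k * q (t / θ' ^ (n+1)) ≤ (k * q (t / θ' ^ n)) ^ 2 := by
        have := mul_le_mul_of_nonneg_left h1 hk0.le
        calc k * q (t / θ' ^ (n+1)) ≤ k * (k * q (t / θ' ^ n) ^ 2) := this
          _ = (k * q (t / θ' ^ n)) ^ 2 := by ring
      have h3 : (k * q (t / θ' ^ n)) ^ 2 ≤ ((1/2 : ℝ) ^ (2 ^ n)) ^ 2 :=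
        pow_le_pow_left₀ (by positivity) (ih t ht) 2
      calc k * q (t / θ' ^ (n+1)) ≤ ((1/2 : ℝ) ^ (2 ^ n)) ^ 2 := le_trans h2 h3
        _ = (1/2 : ℝ) ^ (2 ^ (n+1)) := by rw [← pow_mul, pow_succ]
  -- constants
  set L : ℝ := -Real.log θ' with hLdef
  have hL : 0 < L := by
    rw [hLdef, neg_pos]
    exact Real.log_neg hθ'0 (by linarith)
  set α : ℝ := Real.log 2 / L with hαdef
  have hlog2 : (0:ℝ) < Real.log 2 := Real.log_pos one_lt_two
  have hα : 0 < α := div_pos hlog2 hL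
  set β : ℝ := Real.log 2 / (2 * s₀ ^ α) with hβdef
  have hs₀α : (0:ℝ) < s₀ ^ α := Real.rpow_pos_of_pos hs₀pos α
  have hβ : 0 < β := div_pos hlog2 (by positivity)
  set M : ℝ := Real.exp (β * s₀ ^ α) with hMdef
  have hM : 0 < M := Real.exp_pos _
  -- key bound for t ≥ s₀
  have key : ∀ t : ℝ, s₀ ≤ t → q t ≤ Real.exp (-β * t ^ α) := by
    intro t ht
    have ht0 : 0 < t := lt_of_lt_of_le hs₀pos ht
    have hts : 1 ≤ t / s₀ := (one_le_div hs₀pos).mpr ht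
    have hlogts : 0 ≤ Real.log (t / s₀) := Real.log_nonneg hts
    set n : ℕ := ⌊Real.log (t / s₀) / L⌋₊ with hndef
    have hfl : (n : ℝ) ≤ Real.log (t / s₀) / L := Nat.floor_le (by positivity)
    have hfl2 : Real.log (t / s₀) / L < n + 1 := Nat.lt_floor_add_one _
    have hnL : (n:ℝ) * L ≤ Real.log (t / s₀) := by
      rw [← le_div_iff₀ hL]; exact hfl
    have hθn : θ' ^ n = Real.exp (-((n:ℝ) * L)) := by
      rw [hLdef]
      rw [show -((n:ℝ) * -Real.log θ') = (n:ℝ) * Real.log θ' by ring,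
        Real.exp_nat_mul, Real.exp_log hθ'0]
    have hts₀ : s₀ ≤ t * θ' ^ n := by
      have h1 : s₀ / t ≤ θ' ^ n := by
        rw [hθn, ← Real.exp_log (show (0:ℝ) < s₀ / t by positivity)]
        apply Real.exp_le_exp.mpr
        have hinv : Real.log (s₀ / t) = - Real.log (t / s₀) := by
          rw [← Real.log_inv, inv_div]
        rw [hinv]
        linarith
      calc s₀ = (s₀ / t) * t := by field_simp
        _ ≤ θ' ^ n * t := mul_le_mul_of_nonneg_right h1 ht0.le
        _ = t * θ' ^ n := mul_comm _ _
    have hclaim := claim n (t * θ' ^ n) hts₀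
    have heq : t * θ' ^ n / θ' ^ n = t := by
      field_simp
    rw [heq] at hclaim
    have hq : q t ≤ (1/2 : ℝ) ^ (2 ^ n) := by
      have : q t ≤ k * q t := le_mul_of_one_le_left (q_nonneg t) hk
      linarith
    -- now compare (1/2)^(2^n) with exp(-β t^α)
    have e2 : ((1:ℝ)/2) ^ (2^n : ℕ) = Real.exp (-((2^n : ℕ) * Real.log 2)) := by
      rw [Real.exp_neg, Real.exp_nat_mul, Real.exp_log two_pos, one_div, inv_pow]
    have hrpow : (t / s₀) ^ α ≤ 2 * (2:ℝ) ^ (n:ℕ) := by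
      have h1 : (t / s₀) ^ α = Real.exp (Real.log (t / s₀) * α) :=
        Real.rpow_def_of_pos (by positivity) α
      have h2 : Real.log (t / s₀) * α ≤ ((n:ℝ) + 1) * Real.log 2 := by
        rw [hαdef]
        have := mul_le_mul_of_nonneg_right hfl2.le hlog2.le
        calc Real.log (t / s₀) * (Real.log 2 / L)
            = (Real.log (t / s₀) / L) * Real.log 2 := by ring
          _ ≤ ((n:ℝ) + 1) * Real.log 2 := this
      have h3 : Real.exp (((n:ℝ) + 1) * Real.log 2) = 2 * (2:ℝ) ^ (n:ℕ) := by
        rw [show ((n:ℝ) + 1) * Real.log 2 = Real.log 2 + (n:ℝ) * Real.log 2 by ring,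
          Real.exp_add, Real.exp_nat_mul, Real.exp_log two_pos]
      rw [h1, ← h3]
      exact Real.exp_le_exp.mpr h2
    have hβt : β * t ^ α ≤ (2^n : ℕ) * Real.log 2 := by
      have hdiv : (t / s₀) ^ α = t ^ α / s₀ ^ α := Real.div_rpow ht0.le hs₀pos.le α
      have h1 : β * t ^ α = (Real.log 2 / 2) * (t / s₀) ^ α := by
        rw [hβdef, hdiv]
        field_simp
      have h2 : (Real.log 2 / 2) * (t / s₀) ^ α ≤ (Real.log 2 / 2) * (2 * (2:ℝ) ^ (n:ℕ)) :=
        mul_le_mul_of_nonneg_left hrpow (by positivity)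
      have h3 : ((2:ℕ)^n : ℕ) = ((2:ℝ) ^ (n:ℕ) : ℝ) := by push_cast; ring
      rw [h1]
      calc (Real.log 2 / 2) * (t / s₀) ^ α ≤ (Real.log 2 / 2) * (2 * (2:ℝ) ^ (n:ℕ)) := h2
        _ = (2:ℝ) ^ (n:ℕ) * Real.log 2 := by ring
        _ = ((2^n : ℕ) : ℝ) * Real.log 2 := by rw [h3]
    calc q t ≤ (1/2 : ℝ) ^ (2 ^ n) := hq
      _ = Real.exp (-((2^n : ℕ) * Real.log 2)) := e2
      _ ≤ Real.exp (-β * t ^ α) := by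
          apply Real.exp_le_exp.mpr
          linarith
  -- tail bound for all t ≥ 0
  have tailbound : ∀ t : ℝ, 0 ≤ t → q t ≤ M * Real.exp (-β * t ^ α) := by
    intro t ht
    rcases le_or_gt s₀ t with h | h
    · calc q t ≤ Real.exp (-β * t ^ α) := key t h
        _ ≤ M * Real.exp (-β * t ^ α) :=
          le_mul_of_one_le_left (Real.exp_pos _).le (Real.one_le_exp (by positivity))
    · have htα : t ^ α ≤ s₀ ^ α := Real.rpow_le_rpow ht h.le hα.le
      calc q t ≤ 1 := q_le_one t
        _ ≤ M * Real.exp (-β * t ^ α) := by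
            rw [hMdef, ← Real.exp_add]
            apply Real.one_le_exp
            nlinarith
  have final : ∀ t : ℝ, 0 ≤ t → μ {ω | t ≤ X ω} ≤ ENNReal.ofReal (M * Real.exp (-β * t ^ α)) := by
    intro t ht
    rw [ENNReal.le_ofReal_iff_toReal_le (hfin t) (by positivity)]
    exact tailbound t ht
  refine ⟨⟨M, α, β, hM, hα, hβ, final⟩, ?_⟩
  -- integrability
  refine ⟨hX.aestronglyMeasurable, ?_⟩
  rw [hasFiniteIntegral_iff_ofReal (Filter.Eventually.of_forall hXnonneg)]
  rw [lintegral_eq_lintegral_meas_le μ (Filter.Eventually.of_forall hXnonneg) hX.aemeasurable]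
  have hb : IntegrableOn (fun t : ℝ => M * Real.exp (-β * t ^ α)) (Set.Ioi 0) :=
    (aux_integrable_exp_neg_rpow hβ hα).const_mul M
  have hbfin : ∫⁻ t in Set.Ioi (0:ℝ), ENNReal.ofReal (M * Real.exp (-β * t ^ α)) < ∞ := by
    rw [← hasFiniteIntegral_iff_ofReal (Filter.Eventually.of_forall (fun t => by positivity))]
    exact hb.2
  refine lt_of_le_of_lt ?_ hbfin
  apply setLIntegral_mono' measurableSet_Ioi
  intro t ht
  exact final t (le_of_lt ht)
end

section
/- Let ξ be a Borel probability measure on the space of linear subspaces of ℝⁿ, and define χ_ξ(x) = ∫ min{‖P_E x‖, ‖P_{E⊥} x‖} dξ(E). Then the zero set χ_ξ^{-1}(0) ⊂ ℝⁿ can be written as a union of mutually orthogonal linear subspaces; moreover this decomposition into nonzero mutually orthogonal subspaces is unique. -/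
open MeasureTheory
open scoped ENNReal RealInnerProductSpace

/-- The orthogonal projection onto `E`, as a map `ℝⁿ → ℝⁿ`. -/
noncomputable def projCLM {n : ℕ} (E : Submodule ℝ (EuclideanSpace ℝ (Fin n))) :
    EuclideanSpace ℝ (Fin n) →L[ℝ] EuclideanSpace ℝ (Fin n) :=
  E.subtypeL.comp (E.orthogonalProjectionOnto)

/-- The space of linear subspaces of `ℝⁿ`, topologized so that `E ↦ P_E` is continuous
(the coarsest such topology). -/
noncomputable instance subspaceTop (n : ℕ) :
    TopologicalSpace (Submodule ℝ (EuclideanSpace ℝ (Fin n))) :=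
  TopologicalSpace.induced projCLM inferInstance

/-- The Borel σ-algebra on the space of linear subspaces of `ℝⁿ`. -/
noncomputable instance subspaceMeas (n : ℕ) :
    MeasurableSpace (Submodule ℝ (EuclideanSpace ℝ (Fin n))) := borel _

/-- `χ_ξ(x) = ∫ min{‖P_E x‖, ‖P_{E⊥} x‖} dξ(E)`. -/
noncomputable def chiXi {n : ℕ}
    (ξ : Measure (Submodule ℝ (EuclideanSpace ℝ (Fin n))))
    (x : EuclideanSpace ℝ (Fin n)) : ℝ :=
  ∫ E, min ‖projCLM E x‖ ‖projCLM Eᗮ x‖ ∂ξ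

instance subspaceBorel (n : ℕ) : BorelSpace (Submodule ℝ (EuclideanSpace ℝ (Fin n))) := ⟨rfl⟩

namespace ChiXiAux

variable {n : ℕ}

lemma continuous_projCLM : Continuous (projCLM (n := n)) := by
  rw [continuous_iff_le_induced]
  exact le_of_eq rfl

lemma continuous_projCLM_apply (x : EuclideanSpace ℝ (Fin n)) :
    Continuous fun E : Submodule ℝ (EuclideanSpace ℝ (Fin n)) => projCLM E x :=
  (ContinuousLinearMap.apply ℝ _ x).continuous.comp continuous_projCLM

lemma norm_projCLM_le (E : Submodule ℝ (EuclideanSpace ℝ (Fin n)))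
    (x : EuclideanSpace ℝ (Fin n)) : ‖projCLM E x‖ ≤ ‖x‖ := by
  simpa [projCLM] using (E.orthogonalProjectionOnto).le_opNorm x |>.trans
    (mul_le_of_le_one_left (norm_nonneg x) (Submodule.orthogonalProjectionOnto_norm_le E))

lemma projCLM_orth (E : Submodule ℝ (EuclideanSpace ℝ (Fin n)))
    (x : EuclideanSpace ℝ (Fin n)) : projCLM Eᗮ x = x - projCLM E x := by
  simp [projCLM]

lemma projCLM_eq_zero_iff (E : Submodule ℝ (EuclideanSpace ℝ (Fin n)))
    (x : EuclideanSpace ℝ (Fin n)) : projCLM E x = 0 ↔ x ∈ Eᗮ := by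
  rw [← Submodule.orthogonalProjectionOnto_eq_zero_iff (K := E)]
  constructor
  · intro h
    exact Subtype.ext (by simpa [projCLM] using h)
  · intro h
    simp [projCLM, h]

lemma zero_of_mem_both {E : Submodule ℝ (EuclideanSpace ℝ (Fin n))}
    {x : EuclideanSpace ℝ (Fin n)} (h1 : x ∈ E) (h2 : x ∈ Eᗮ) : x = 0 :=
  Submodule.disjoint_def.mp E.orthogonal_disjoint x h1 h2

/-- The key characterization of the zero set of `χ_ξ`. -/
lemma chiXi_eq_zero_iff (ξ : Measure (Submodule ℝ (EuclideanSpace ℝ (Fin n))))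
    [IsProbabilityMeasure ξ] (x : EuclideanSpace ℝ (Fin n)) :
    chiXi ξ x = 0 ↔ ∀ᵐ (E : Submodule ℝ (EuclideanSpace ℝ (Fin n))) ∂ξ, x ∈ E ∨ x ∈ Eᗮ := by
  have hcont : Continuous fun E : Submodule ℝ (EuclideanSpace ℝ (Fin n)) =>
      min ‖projCLM E x‖ ‖projCLM Eᗮ x‖ := by
    have h2 : (fun E : Submodule ℝ (EuclideanSpace ℝ (Fin n)) => ‖projCLM Eᗮ x‖)
        = fun E => ‖x - projCLM E x‖ := by
      funext E; rw [projCLM_orth]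
    exact ((continuous_projCLM_apply x).norm).min
      (h2 ▸ (continuous_const.sub (continuous_projCLM_apply x)).norm)
  have hnonneg : 0 ≤ fun E : Submodule ℝ (EuclideanSpace ℝ (Fin n)) =>
      min ‖projCLM E x‖ ‖projCLM Eᗮ x‖ := by
    intro E; exact le_min (norm_nonneg _) (norm_nonneg _)
  have hint : Integrable
      (fun E : Submodule ℝ (EuclideanSpace ℝ (Fin n)) =>
        min ‖projCLM E x‖ ‖projCLM Eᗮ x‖) ξ := by
    refine (integrable_const ‖x‖).mono' hcont.aestronglyMeasurable ?_
    filter_upwards with E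
    rw [Real.norm_eq_abs, abs_of_nonneg (hnonneg E)]
    exact (min_le_left _ _).trans (norm_projCLM_le E x)
  rw [chiXi, integral_eq_zero_iff_of_nonneg hnonneg hint]
  unfold Filter.EventuallyEq
  constructor <;> intro h <;> filter_upwards [h] <;> intro E hE
  · rcases min_eq_iff.mp hE with h' | h'
    · exact Or.inr ((projCLM_eq_zero_iff E x).mp (norm_eq_zero.mp h'.1))
    · have := (projCLM_eq_zero_iff Eᗮ x).mp (norm_eq_zero.mp h'.1)
      exact Or.inl (E.orthogonal_orthogonal ▸ this)
  · rcases hE with h' | h'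
    · have : projCLM Eᗮ x = 0 := (projCLM_eq_zero_iff Eᗮ x).mpr
        (E.le_orthogonal_orthogonal h')
      simp [this]
    · have : projCLM E x = 0 := (projCLM_eq_zero_iff E x).mpr h'
      simp [this]

/-- The subspace of all `y` that a.s. lie in `E` exactly when `x` does. -/
noncomputable def Vsub (ξ : Measure (Submodule ℝ (EuclideanSpace ℝ (Fin n))))
    (x : EuclideanSpace ℝ (Fin n)) (hx0 : x ≠ 0)
    (hx : ∀ᵐ (E : Submodule ℝ (EuclideanSpace ℝ (Fin n))) ∂ξ, x ∈ E ∨ x ∈ Eᗮ) : Submodule ℝ (EuclideanSpace ℝ (Fin n)) where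
  carrier := {y | ∀ᵐ (E : Submodule ℝ (EuclideanSpace ℝ (Fin n))) ∂ξ, (y ∈ E ∧ x ∈ E) ∨ (y ∈ Eᗮ ∧ x ∈ Eᗮ)}
  zero_mem' := by
    simp only [Set.mem_setOf_eq]
    filter_upwards [hx] with E hE
    rcases hE with h | h
    · exact Or.inl ⟨zero_mem _, h⟩
    · exact Or.inr ⟨zero_mem _, h⟩
  add_mem' := by
    intro a b ha hb
    simp only [Set.mem_setOf_eq] at ha hb ⊢
    filter_upwards [ha, hb] with E hEa hEb
    rcases hEa with ⟨ha1, hx1⟩ | ⟨ha1, hx1⟩ <;> rcases hEb with ⟨hb1, hx2⟩ | ⟨hb1, hx2⟩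
    · exact Or.inl ⟨add_mem ha1 hb1, hx1⟩
    · exact absurd (zero_of_mem_both hx1 hx2) hx0
    · exact absurd (zero_of_mem_both hx2 hx1) hx0
    · exact Or.inr ⟨add_mem ha1 hb1, hx1⟩
  smul_mem' := by
    intro c a ha
    simp only [Set.mem_setOf_eq] at ha ⊢
    filter_upwards [ha] with E hE
    rcases hE with ⟨ha1, hx1⟩ | ⟨ha1, hx1⟩
    · exact Or.inl ⟨Submodule.smul_mem _ c ha1, hx1⟩
    · exact Or.inr ⟨Submodule.smul_mem _ c ha1, hx1⟩

lemma mem_Vsub_iff {ξ : Measure (Submodule ℝ (EuclideanSpace ℝ (Fin n)))}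
    {x y : EuclideanSpace ℝ (Fin n)} {hx0 : x ≠ 0} {hx : ∀ᵐ (E : Submodule ℝ (EuclideanSpace ℝ (Fin n))) ∂ξ, x ∈ E ∨ x ∈ Eᗮ} :
    y ∈ Vsub ξ x hx0 hx ↔ ∀ᵐ (E : Submodule ℝ (EuclideanSpace ℝ (Fin n))) ∂ξ, (y ∈ E ∧ x ∈ E) ∨ (y ∈ Eᗮ ∧ x ∈ Eᗮ) := Iff.rfl

lemma mem_Vsub_self {ξ : Measure (Submodule ℝ (EuclideanSpace ℝ (Fin n)))}
    {x : EuclideanSpace ℝ (Fin n)} {hx0 : x ≠ 0} {hx : ∀ᵐ (E : Submodule ℝ (EuclideanSpace ℝ (Fin n))) ∂ξ, x ∈ E ∨ x ∈ Eᗮ} :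
    x ∈ Vsub ξ x hx0 hx := by
  rw [mem_Vsub_iff]
  filter_upwards [hx] with E hE
  rcases hE with h | h
  · exact Or.inl ⟨h, h⟩
  · exact Or.inr ⟨h, h⟩

/-- "Same pattern a.e." is transitive through a nonzero middle vector. -/
lemma pattern_trans {ξ : Measure (Submodule ℝ (EuclideanSpace ℝ (Fin n)))}
    {x u y : EuclideanSpace ℝ (Fin n)} (hu0 : u ≠ 0)
    (h1 : ∀ᵐ (E : Submodule ℝ (EuclideanSpace ℝ (Fin n))) ∂ξ, (x ∈ E ∧ u ∈ E) ∨ (x ∈ Eᗮ ∧ u ∈ Eᗮ))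
    (h2 : ∀ᵐ (E : Submodule ℝ (EuclideanSpace ℝ (Fin n))) ∂ξ, (u ∈ E ∧ y ∈ E) ∨ (u ∈ Eᗮ ∧ y ∈ Eᗮ)) :
    ∀ᵐ (E : Submodule ℝ (EuclideanSpace ℝ (Fin n))) ∂ξ, (x ∈ E ∧ y ∈ E) ∨ (x ∈ Eᗮ ∧ y ∈ Eᗮ) := by
  filter_upwards [h1, h2] with E hE1 hE2
  rcases hE1 with ⟨hx1, hu1⟩ | ⟨hx1, hu1⟩ <;> rcases hE2 with ⟨hu2, hy2⟩ | ⟨hu2, hy2⟩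
  · exact Or.inl ⟨hx1, hy2⟩
  · exact absurd (zero_of_mem_both hu1 hu2) hu0
  · exact absurd (zero_of_mem_both hu2 hu1) hu0
  · exact Or.inr ⟨hx1, hy2⟩

lemma pattern_symm {ξ : Measure (Submodule ℝ (EuclideanSpace ℝ (Fin n)))}
    {x y : EuclideanSpace ℝ (Fin n)}
    (h : ∀ᵐ (E : Submodule ℝ (EuclideanSpace ℝ (Fin n))) ∂ξ, (x ∈ E ∧ y ∈ E) ∨ (x ∈ Eᗮ ∧ y ∈ Eᗮ)) :
    ∀ᵐ (E : Submodule ℝ (EuclideanSpace ℝ (Fin n))) ∂ξ, (y ∈ E ∧ x ∈ E) ∨ (y ∈ Eᗮ ∧ x ∈ Eᗮ) := by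
  filter_upwards [h] with E hE
  tauto

lemma Vsub_congr {ξ : Measure (Submodule ℝ (EuclideanSpace ℝ (Fin n)))}
    {x y : EuclideanSpace ℝ (Fin n)} {hx0 : x ≠ 0} {hx : ∀ᵐ (E : Submodule ℝ (EuclideanSpace ℝ (Fin n))) ∂ξ, x ∈ E ∨ x ∈ Eᗮ}
    {hy0 : y ≠ 0} {hy : ∀ᵐ (E : Submodule ℝ (EuclideanSpace ℝ (Fin n))) ∂ξ, y ∈ E ∨ y ∈ Eᗮ}
    (hxy : ∀ᵐ (E : Submodule ℝ (EuclideanSpace ℝ (Fin n))) ∂ξ, (x ∈ E ∧ y ∈ E) ∨ (x ∈ Eᗮ ∧ y ∈ Eᗮ)) :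
    Vsub ξ x hx0 hx = Vsub ξ y hy0 hy := by
  ext z
  rw [mem_Vsub_iff, mem_Vsub_iff]
  constructor <;> intro hz
  · exact pattern_trans hx0 hz hxy
  · exact pattern_trans hy0 hz (pattern_symm hxy)

/-- Covering lemma used for uniqueness: a nonzero subspace covered (up to `0`) by a pairwise
orthogonal family is contained in one member of the family. -/
lemma le_of_cover {S : Set (Submodule ℝ (EuclideanSpace ℝ (Fin n)))}
    (p : S.Pairwise fun E F => E ≤ Fᗮ) {W : Submodule ℝ (EuclideanSpace ℝ (Fin n))}
    (hW : W ≠ ⊥)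
    (hcov : (W : Set (EuclideanSpace ℝ (Fin n))) ⊆
      {0} ∪ ⋃ F ∈ S, (F : Set (EuclideanSpace ℝ (Fin n)))) :
    ∃ F ∈ S, W ≤ F := by
  obtain ⟨x, hxW, hx0⟩ := Submodule.exists_mem_ne_zero_of_ne_bot hW
  have hxcov := hcov hxW
  rcases hxcov with h0 | hx
  · exact absurd h0 hx0
  rw [Set.mem_iUnion₂] at hx
  obtain ⟨F, hFS, hxF⟩ := hx
  refine ⟨F, hFS, fun y hyW => ?_⟩
  by_cases hyF : y ∈ F
  · exact hyF
  by_cases hy0 : y = 0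
  · exact hy0 ▸ zero_mem F
  -- y lies in some other member F' ⊥ F
  rcases hcov hyW with h0 | hy
  · exact absurd h0 hy0
  rw [Set.mem_iUnion₂] at hy
  obtain ⟨F', hF'S, hyF'⟩ := hy
  have hFF' : F' ≠ F := fun h => hyF (h ▸ hyF')
  have hyx : ⟪y, x⟫ = 0 := (Submodule.mem_orthogonal' F y).mp (p hF'S hFS hFF' hyF') x hxF
  -- consider z = x + y ∈ W
  have hzW : x + y ∈ W := add_mem hxW hyW
  have hzx : ⟪x + y, x⟫ ≠ 0 := by
    rw [inner_add_left, hyx, add_zero]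
    exact fun h => hx0 (inner_self_eq_zero.mp h)
  have hzy : ⟪x + y, y⟫ ≠ 0 := by
    rw [inner_add_left, real_inner_comm y x, hyx, zero_add]
    exact fun h => hy0 (inner_self_eq_zero.mp h)
  have hz0 : x + y ≠ 0 := fun h => hzx (by rw [h, inner_zero_left])
  rcases hcov hzW with h0 | hz
  · exact absurd h0 hz0
  rw [Set.mem_iUnion₂] at hz
  obtain ⟨F'', hF''S, hzF''⟩ := hz
  have hF''F : F'' = F := by
    by_contra hne
    exact hzx ((Submodule.mem_orthogonal' F (x + y)).mp (p hF''S hFS hne hzF'') x hxF)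
  have hF''F' : F'' = F' := by
    by_contra hne
    exact hzy ((Submodule.mem_orthogonal' F' (x + y)).mp (p hF''S hF'S hne hzF'') y hyF')
  exact absurd (hF''F' ▸ hF''F) hFF'

lemma subset_of_decomp {S₁ S₂ : Set (Submodule ℝ (EuclideanSpace ℝ (Fin n)))}
    (h1 : ∀ E ∈ S₁, E ≠ ⊥) (h2 : ∀ E ∈ S₂, E ≠ ⊥)
    (p1 : S₁.Pairwise fun E F => E ≤ Fᗮ) (p2 : S₂.Pairwise fun E F => E ≤ Fᗮ)
    (hU : ({0} ∪ ⋃ E ∈ S₁, (E : Set (EuclideanSpace ℝ (Fin n)))) =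
      {0} ∪ ⋃ E ∈ S₂, (E : Set (EuclideanSpace ℝ (Fin n)))) :
    S₁ ⊆ S₂ := by
  intro E hE
  have hcovE : (E : Set (EuclideanSpace ℝ (Fin n))) ⊆
      {0} ∪ ⋃ F ∈ S₂, (F : Set (EuclideanSpace ℝ (Fin n))) := by
    rw [← hU]
    exact fun z hz => Or.inr (Set.mem_iUnion₂.mpr ⟨E, hE, hz⟩)
  obtain ⟨F, hFS, hEF⟩ := le_of_cover p2 (h1 E hE) hcovE
  have hcovF : (F : Set (EuclideanSpace ℝ (Fin n))) ⊆
      {0} ∪ ⋃ G ∈ S₁, (G : Set (EuclideanSpace ℝ (Fin n))) := by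
    rw [hU]
    exact fun z hz => Or.inr (Set.mem_iUnion₂.mpr ⟨F, hFS, hz⟩)
  obtain ⟨E', hE'S, hFE'⟩ := le_of_cover p1 (h2 F hFS) hcovF
  have hEE' : E = E' := by
    by_contra hne
    have hle : E ≤ E' ⊓ E'ᗮ := le_inf (hEF.trans hFE') (p1 hE hE'S hne)
    rw [Submodule.inf_orthogonal_eq_bot] at hle
    exact h1 E hE (le_bot_iff.mp hle)
  have : E = F := le_antisymm hEF (hEE' ▸ hFE')
  exact this ▸ hFS

end ChiXiAux

/-- The zero set of `χ_ξ` is a union of mutually orthogonal linear subspaces,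
and the decomposition into nonzero mutually orthogonal subspaces is unique. -/
theorem chiXi_zeroSet_decomposition {n : ℕ}
    (ξ : Measure (Submodule ℝ (EuclideanSpace ℝ (Fin n)))) [IsProbabilityMeasure ξ] :
    (∃ S : Set (Submodule ℝ (EuclideanSpace ℝ (Fin n))),
      (S.Pairwise fun E F => E ≤ Fᗮ) ∧
      {x | chiXi ξ x = 0} = ⋃ E ∈ S, (E : Set (EuclideanSpace ℝ (Fin n)))) ∧
    (∀ S₁ S₂ : Set (Submodule ℝ (EuclideanSpace ℝ (Fin n))),
      (∀ E ∈ S₁, E ≠ ⊥) → (∀ E ∈ S₂, E ≠ ⊥) →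
      (S₁.Pairwise fun E F => E ≤ Fᗮ) → (S₂.Pairwise fun E F => E ≤ Fᗮ) →
      {x | chiXi ξ x = 0} = {0} ∪ ⋃ E ∈ S₁, (E : Set (EuclideanSpace ℝ (Fin n))) →
      {x | chiXi ξ x = 0} = {0} ∪ ⋃ E ∈ S₂, (E : Set (EuclideanSpace ℝ (Fin n))) →
      S₁ = S₂) := by
  classical
  constructor
  · -- existence
    refine ⟨{V | V = ⊥ ∨ ∃ x, ∃ hx0 : x ≠ 0, ∃ hx : ∀ᵐ (E : Submodule ℝ (EuclideanSpace ℝ (Fin n))) ∂ξ, x ∈ E ∨ x ∈ Eᗮ,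
      V = ChiXiAux.Vsub ξ x hx0 hx}, ?_, ?_⟩
    · -- pairwise orthogonal
      rintro A hA B hB hne
      rcases hA with rfl | ⟨x, hx0, hx, rfl⟩
      · exact bot_le
      rcases hB with rfl | ⟨y, hy0, hy, rfl⟩
      · rw [Submodule.bot_orthogonal_eq_top]; exact le_top
      intro u hu
      rw [Submodule.mem_orthogonal' _ u]
      intro w hw
      by_contra hinner
      apply hne
      have hu0 : u ≠ 0 := fun h => hinner (by rw [h, inner_zero_left])
      have hw0 : w ≠ 0 := fun h => hinner (by rw [h, inner_zero_right])
      rw [ChiXiAux.mem_Vsub_iff] at hu hw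
      have huw : ∀ᵐ (E : Submodule ℝ (EuclideanSpace ℝ (Fin n))) ∂ξ, (u ∈ E ∧ w ∈ E) ∨ (u ∈ Eᗮ ∧ w ∈ Eᗮ) := by
        filter_upwards [hu, hw] with E hEu hEw
        rcases hEu with ⟨hu1, _⟩ | ⟨hu1, _⟩ <;> rcases hEw with ⟨hw1, _⟩ | ⟨hw1, _⟩
        · exact Or.inl ⟨hu1, hw1⟩
        · exact absurd (by rw [real_inner_comm]; exact (Submodule.mem_orthogonal' E w).mp hw1 u hu1) hinner
        · exact absurd ((Submodule.mem_orthogonal' E u).mp hu1 w hw1) hinner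
        · exact Or.inr ⟨hu1, hw1⟩
      have hxy : ∀ᵐ (E : Submodule ℝ (EuclideanSpace ℝ (Fin n))) ∂ξ, (x ∈ E ∧ y ∈ E) ∨ (x ∈ Eᗮ ∧ y ∈ Eᗮ) :=
        ChiXiAux.pattern_trans hw0
          (ChiXiAux.pattern_trans hu0 (ChiXiAux.pattern_symm hu) huw) hw
      exact ChiXiAux.Vsub_congr hxy
    · -- the union equals the zero set
      ext z
      simp only [Set.mem_setOf_eq, Set.mem_iUnion₂]
      constructor
      · intro hz
        by_cases hz0 : z = 0
        · exact ⟨⊥, Or.inl rfl, SetLike.mem_coe.mpr (hz0 ▸ Submodule.zero_mem ⊥)⟩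
        · have hz' := (ChiXiAux.chiXi_eq_zero_iff ξ z).mp hz
          exact ⟨ChiXiAux.Vsub ξ z hz0 hz', Or.inr ⟨z, hz0, hz', rfl⟩,
            SetLike.mem_coe.mpr ChiXiAux.mem_Vsub_self⟩
      · rintro ⟨V, hVS, hzV⟩
        rcases hVS with rfl | ⟨x, hx0, hx, rfl⟩
        · have : z = 0 := (Submodule.mem_bot ℝ).mp (SetLike.mem_coe.mp hzV)
          rw [this, ChiXiAux.chiXi_eq_zero_iff]
          exact Filter.Eventually.of_forall fun E => Or.inl (zero_mem E)
        · rw [SetLike.mem_coe, ChiXiAux.mem_Vsub_iff] at hzV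
          rw [ChiXiAux.chiXi_eq_zero_iff]
          filter_upwards [hzV] with E hE
          rcases hE with ⟨h, _⟩ | ⟨h, _⟩
          · exact Or.inl h
          · exact Or.inr h
  · -- uniqueness
    intro S₁ S₂ h1 h2 p1 p2 hZ1 hZ2
    have hU : ({0} ∪ ⋃ E ∈ S₁, (E : Set (EuclideanSpace ℝ (Fin n)))) =
        {0} ∪ ⋃ E ∈ S₂, (E : Set (EuclideanSpace ℝ (Fin n))) := hZ1 ▸ hZ2
    exact le_antisymm (ChiXiAux.subset_of_decomp h1 h2 p1 p2 hU)
      (ChiXiAux.subset_of_decomp h2 h1 p2 p1 hU.symm)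
end

section
/- Let X = (X₁,…,X_n) be independent random variables, let S₁,…,S_k ⊆ {1,…,n} be such that each element of {1,…,n} lies in at most r of the S_i, and let X_{S_i} = (X_m)_{m ∈ S_i}. Then for measurable ψ_i with finite variances, Var(Σ_{i=1}^k ψ_i(X_{S_i})) ≤ r · Σ_{i=1}^k Var(ψ_i(X_{S_i})) (Madiman–Barron inequality). -/
open MeasureTheory ProbabilityTheory MeasurableSpace Set

set_option linter.unusedSectionVars false
set_option linter.unusedVariables false

section MBHelpers

variable {Ω : Type*} {mf m₁ m₂ : MeasurableSpace Ω} [m0 : MeasurableSpace Ω] {μ : Measure Ω}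
  [IsProbabilityMeasure μ]




lemma mb_integrable_mul {f g : Ω → ℝ} (hf : MemLp f 2 μ) (hg : MemLp g 2 μ) :
    Integrable (fun ω => f ω * g ω) μ := by
  refine Integrable.mono' (((hf.integrable_sq.add hg.integrable_sq)).div_const 2)
    (hf.aestronglyMeasurable.mul hg.aestronglyMeasurable) (ae_of_all _ fun ω => ?_)
  rw [Real.norm_eq_abs, abs_mul]
  simp only [Pi.add_apply]
  nlinarith [sq_abs (f ω), sq_abs (g ω), sq_nonneg (|f ω| - |g ω|), abs_nonneg (f ω),
    abs_nonneg (g ω)]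

lemma mb_memℒp_two_condexp (hm : m₂ ≤ m0) {f : Ω → ℝ}
    (hf : MemLp f 2 μ) : MemLp (μ[f|m₂]) 2 μ := by
  have hint : Integrable f μ := hf.integrable one_le_two
  have h_eq : (↑↑(condExpL2 ℝ ℝ hm (hf.toLp f) : Lp ℝ 2 μ) : Ω → ℝ) =ᵐ[μ] μ[f|m₂] := by
    refine ae_eq_condExp_of_forall_setIntegral_eq hm hint
      (fun s _ _ => ((Lp.memLp _).integrable one_le_two).integrableOn)
      (fun s hs hμs => ?_) (lpMeas.aestronglyMeasurable _)
    rw [integral_condExpL2_eq hm (hf.toLp f) hs hμs.ne]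
    exact setIntegral_congr_ae (hm s hs) ((hf.coeFn_toLp).mono fun ω hω _ => hω)
  exact (Lp.memLp _).ae_eq h_eq

lemma mb_integral_mul_condexp (hm : m₂ ≤ m0) {g h : Ω → ℝ}
    (hgm : StronglyMeasurable[m₂] g) (hg : MemLp g 2 μ) (hh : MemLp h 2 μ) :
    ∫ ω, g ω * (μ[h|m₂]) ω ∂μ = ∫ ω, g ω * h ω ∂μ := by
  have h1 : Integrable (g * h) μ := mb_integrable_mul hg hh
  have h2 := condExp_mul_of_stronglyMeasurable_left hgm h1 (hh.integrable one_le_two)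
  have h3 : ∫ ω, (μ[g * h|m₂]) ω ∂μ = ∫ ω, (g * μ[h|m₂]) ω ∂μ := integral_congr_ae h2
  have h4 : ∫ ω, (μ[g * h|m₂]) ω ∂μ = ∫ ω, (g * h) ω ∂μ := integral_condExp hm
  simp only [Pi.mul_apply] at h3 h4 ⊢
  rw [← h3, h4]

lemma mb_integral_sq_sum {ι : Type*} (T : Finset ι) (g : ι → Ω → ℝ)
    (hg : ∀ i ∈ T, MemLp (g i) 2 μ)
    (horth : ∀ i ∈ T, ∀ j ∈ T, i ≠ j → ∫ ω, g i ω * g j ω ∂μ = 0) :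
    ∫ ω, (∑ i ∈ T, g i ω) ^ 2 ∂μ = ∑ i ∈ T, ∫ ω, g i ω ^ 2 ∂μ := by
  have hint : ∀ i ∈ T, ∀ j ∈ T, Integrable (fun ω => g i ω * g j ω) μ :=
    fun i hi j hj => mb_integrable_mul (hg i hi) (hg j hj)
  calc ∫ ω, (∑ i ∈ T, g i ω) ^ 2 ∂μ
      = ∫ ω, ∑ i ∈ T, ∑ j ∈ T, g i ω * g j ω ∂μ := by
        congr 1; funext ω; rw [sq, Finset.sum_mul_sum]
    _ = ∑ i ∈ T, ∑ j ∈ T, ∫ ω, g i ω * g j ω ∂μ := by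
        rw [integral_finset_sum _ (fun i hi => integrable_finset_sum _ (fun j hj => hint i hi j hj))]
        exact Finset.sum_congr rfl fun i hi => integral_finset_sum _ fun j hj => hint i hi j hj
    _ = ∑ i ∈ T, ∫ ω, g i ω ^ 2 ∂μ := by
        refine Finset.sum_congr rfl fun i hi => ?_
        rw [Finset.sum_eq_single i (fun j hj hne => horth i hi j hj (Ne.symm hne))
          (fun h => absurd hi h)]
        simp [sq]



lemma mb_indepFun_of_indep (h : Indep m₁ m₂ μ)
    {f g : Ω → ℝ} (hf : Measurable[m₁] f) (hg : Measurable[m₂] g) : IndepFun f g μ :=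
  indep_of_indep_of_le_left (indep_of_indep_of_le_right h (measurable_iff_comap_le.mp hg))
    (measurable_iff_comap_le.mp hf)

lemma mb_condexp_sup_indep (hmf : mf ≤ m0) (hm1 : m₁ ≤ m0) (hm2 : m₂ ≤ m0)
    (hindep : Indep (mf ⊔ m₂) m₁ μ) {f : Ω → ℝ}
    (hfm : StronglyMeasurable[mf] f) (hfi : Integrable f μ) :
    μ[f | m₂ ⊔ m₁] =ᵐ[μ] μ[f | m₂] := by
  have hm2m1 : m₂ ⊔ m₁ ≤ m0 := sup_le hm2 hm1
  -- key product formula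
  have key : ∀ (h : Ω → ℝ), StronglyMeasurable[mf ⊔ m₂] h → Integrable h μ →
      ∀ s₂ s₁, MeasurableSet[m₂] s₂ → MeasurableSet[m₁] s₁ →
      ∫ ω in s₂ ∩ s₁, h ω ∂μ = (∫ ω in s₂, h ω ∂μ) * (μ s₁).toReal := by
    intro h hhm hhi s₂ s₁ h₂ h₁
    have hmeas2 : Measurable[mf ⊔ m₂] (s₂.indicator h) :=
      hhm.measurable.indicator (le_sup_right (a := mf) _ h₂)
    have hmeas1 : Measurable[m₁] (s₁.indicator fun _ => (1 : ℝ)) :=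
      measurable_const.indicator h₁
    have hind : IndepFun (s₂.indicator h) (s₁.indicator fun _ => (1 : ℝ)) μ :=
      mb_indepFun_of_indep hindep hmeas2 hmeas1
    have heq : (fun ω => s₂.indicator h ω * s₁.indicator (fun _ => (1 : ℝ)) ω)
        = (s₂ ∩ s₁).indicator h := by
      funext ω
      by_cases hω₂ : ω ∈ s₂ <;> by_cases hω₁ : ω ∈ s₁ <;>
        simp [Set.indicator_apply, hω₂, hω₁]
    have hint2 : Integrable (s₂.indicator h) μ := hhi.indicator (hm2 _ h₂)
    have hint1 : Integrable (s₁.indicator fun _ => (1 : ℝ)) μ :=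
      (integrable_const 1).indicator (hm1 _ h₁)
    have hmul := hind.integral_fun_mul_eq_mul_integral hint2.aestronglyMeasurable hint1.aestronglyMeasurable
    have h3 : ∫ ω, (s₂ ∩ s₁).indicator h ω ∂μ
        = (∫ ω, s₂.indicator h ω ∂μ) * ∫ ω, s₁.indicator (fun _ => (1 : ℝ)) ω ∂μ := by
      rw [← hmul]; exact integral_congr_ae (ae_of_all _ fun ω => (congrFun heq ω).symm)
    rw [integral_indicator ((hm2 _ h₂).inter (hm1 _ h₁)), integral_indicator (hm2 _ h₂),
      integral_indicator_const (1 : ℝ) (hm1 _ h₁)] at h3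
    simp at h3; exact h3
  -- generating π-system
  set P : Set (Set Ω) :=
    {s | ∃ s₂, MeasurableSet[m₂] s₂ ∧ ∃ s₁, MeasurableSet[m₁] s₁ ∧ s = s₂ ∩ s₁} with hP
  have hgen : (m₂ ⊔ m₁ : MeasurableSpace Ω) = MeasurableSpace.generateFrom P := by
    refine le_antisymm (sup_le ?_ ?_) (MeasurableSpace.generateFrom_le ?_)
    · intro s hs
      exact MeasurableSpace.measurableSet_generateFrom
        ⟨s, hs, Set.univ, MeasurableSet.univ, (Set.inter_univ s).symm⟩
    · intro s hs
      exact MeasurableSpace.measurableSet_generateFrom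
        ⟨Set.univ, MeasurableSet.univ, s, hs, (Set.univ_inter s).symm⟩
    · rintro s ⟨s₂, h₂, s₁, h₁, rfl⟩
      exact ((le_sup_left (b := m₁)) _ h₂).inter ((le_sup_right (a := m₂)) _ h₁)
  have hpi : IsPiSystem P := by
    rintro s ⟨s₂, h₂, s₁, h₁, rfl⟩ t ⟨t₂, g₂, t₁, g₁, rfl⟩ -
    exact ⟨s₂ ∩ t₂, h₂.inter g₂, s₁ ∩ t₁, h₁.inter g₁, Set.inter_inter_inter_comm s₂ s₁ t₂ t₁⟩
  have main : ∀ ⦃s : Set Ω⦄, MeasurableSet[m₂ ⊔ m₁] s →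
      ∫ ω in s, (μ[f|m₂]) ω ∂μ = ∫ ω in s, f ω ∂μ := by
    refine MeasurableSpace.induction_on_inter (m := m₂ ⊔ m₁)
      (C := fun s _ => ∫ ω in s, (μ[f|m₂]) ω ∂μ = ∫ ω in s, f ω ∂μ) hgen hpi ?_ ?_ ?_ ?_
    · simp
    · rintro t ⟨s₂, h₂, s₁, h₁, rfl⟩
      rw [key f (hfm.mono le_sup_left) hfi s₂ s₁ h₂ h₁,
        key (μ[f|m₂]) (stronglyMeasurable_condExp.mono le_sup_right) integrable_condExp s₂ s₁ h₂ h₁,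
        setIntegral_condExp hm2 hfi h₂]
    · intro t htm ih
      have ht' : MeasurableSet t := hm2m1 _ htm
      have e1 := integral_add_compl ht' (integrable_condExp (f := f) (m := m₂) (μ := μ))
      have e2 := integral_add_compl ht' hfi
      have e3 : ∫ ω, (μ[f|m₂]) ω ∂μ = ∫ ω, f ω ∂μ := integral_condExp hm2
      linarith
    · intro g hdisj hgm ih
      rw [integral_iUnion (fun i => hm2m1 _ (hgm i)) hdisj integrable_condExp.integrableOn,
        integral_iUnion (fun i => hm2m1 _ (hgm i)) hdisj hfi.integrableOn]
      exact tsum_congr ih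
  exact (ae_eq_condExp_of_forall_setIntegral_eq hm2m1 hfi
    (fun s _ _ => integrable_condExp.integrableOn) (fun s hs _ => main hs)
    (((stronglyMeasurable_condExp (m := m₂) (μ := μ) (f := f)).mono (le_sup_left (b := m₁))).aestronglyMeasurable)).symm

end MBHelpers


theorem mb_main {n k r : ℕ} {Ω : Type*} [m0 : MeasurableSpace Ω]
    (μ : Measure Ω) [IsProbabilityMeasure μ]
    (X : Fin n → Ω → ℝ) (hXmeas : ∀ i, Measurable (X i))
    (hindep : iIndepFun X μ)
    (S : Fin k → Finset (Fin n))
    (hcover : ∀ m : Fin n, (Finset.univ.filter fun i => m ∈ S i).card ≤ r)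
    (ψ : ∀ i : Fin k, ({m : Fin n // m ∈ S i} → ℝ) → ℝ)
    (hψ : ∀ i, Measurable (ψ i))
    (f : Fin k → Ω → ℝ) (hf_def : f = fun i ω => ψ i (fun m => X m.1 ω))
    (hL2 : ∀ i, MemLp (f i) 2 μ) :
    variance (fun ω => ∑ i : Fin k, f i ω) μ ≤
      (r : ℝ) * ∑ i : Fin k, variance (f i) μ := by
  classical
  -- σ-algebras
  set c : Fin n → MeasurableSpace Ω := fun j => MeasurableSpace.comap (X j) inferInstance with hc
  have hc_le : ∀ j, c j ≤ m0 := fun j => measurable_iff_comap_le.mp (hXmeas j)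
  set G : ℕ → MeasurableSpace Ω := fun t => ⨆ j ∈ {j : Fin n | (j : ℕ) < t}, c j with hG
  set mS : Fin k → MeasurableSpace Ω := fun i => ⨆ j ∈ {j : Fin n | j ∈ S i}, c j with hmS
  have hG_le : ∀ t, G t ≤ m0 := fun t => iSup_le fun j => iSup_le fun _ => hc_le j
  have hmS_le : ∀ i, mS i ≤ m0 := fun i => iSup_le fun j => iSup_le fun _ => hc_le j
  have hG_mono : ∀ {t t' : ℕ}, t ≤ t' → G t ≤ G t' := fun {t t'} h =>
    biSup_mono fun j hj => lt_of_lt_of_le hj h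
  have hG0 : G 0 = ⊥ := by
    have h : {j : Fin n | (j : ℕ) < 0} = (∅ : Set (Fin n)) := by ext j; simp
    simp [hG, h]
  have hmS_le_Gn : ∀ i, mS i ≤ G n := fun i => biSup_mono fun j _ => j.isLt
  -- measurability
  have hf_meas : ∀ i, StronglyMeasurable[mS i] (f i) := by
    intro i
    have hπ : Measurable[mS i] (fun ω (m : {m : Fin n // m ∈ S i}) => X m.1 ω) := by
      letI : MeasurableSpace Ω := mS i
      refine measurable_pi_iff.mpr fun m => ?_
      have h1 : Measurable[c m.1] (X m.1) := measurable_iff_comap_le.mpr le_rfl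
      exact h1.mono (le_biSup c (by simp [m.2] : m.1 ∈ {j : Fin n | j ∈ S i})) le_rfl
    rw [hf_def]
    exact ((hψ i).comp hπ).stronglyMeasurable
  have hfi : ∀ i, Integrable (f i) μ := fun i => (hL2 i).integrable one_le_two
  -- martingale differences
  have hD2' : ∀ i t, MemLp (μ[f i | G t]) 2 μ := fun i t => mb_memℒp_two_condexp (hG_le t) (hL2 i)
  set D : Fin k → ℕ → Ω → ℝ := fun i t => μ[f i | G (t+1)] - μ[f i | G t] with hD
  have hD_L2 : ∀ i t, MemLp (D i t) 2 μ := fun i t => (hD2' i (t+1)).sub (hD2' i t)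
  have hD_meas : ∀ i t, StronglyMeasurable[G (t+1)] (D i t) := fun i t =>
    stronglyMeasurable_condExp.sub (stronglyMeasurable_condExp.mono (hG_mono (Nat.le_succ t)))
  -- orthogonality
  have horth : ∀ (i j : Fin k) (t t' : ℕ), t < t' → ∫ ω, D i t ω * D j t' ω ∂μ = 0 := by
    intro i j t t' htt
    have hmeas : StronglyMeasurable[G t'] (D i t) := (hD_meas i t).mono (hG_mono htt)
    have h1 : ∫ ω, D i t ω * (μ[f j | G (t'+1)]) ω ∂μ = ∫ ω, D i t ω * f j ω ∂μ :=
      mb_integral_mul_condexp (hG_le _) (hmeas.mono (hG_mono (Nat.le_succ t')))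
        (hD_L2 i t) (hL2 j)
    have h2 : ∫ ω, D i t ω * (μ[f j | G t']) ω ∂μ = ∫ ω, D i t ω * f j ω ∂μ :=
      mb_integral_mul_condexp (hG_le _) hmeas (hD_L2 i t) (hL2 j)
    have hsub : (fun ω => D i t ω * D j t' ω)
        = fun ω => D i t ω * (μ[f j | G (t'+1)]) ω - D i t ω * (μ[f j | G t']) ω := by
      funext ω
      have hDval : D j t' ω = (μ[f j | G (t'+1)]) ω - (μ[f j | G t']) ω := rfl
      rw [hDval]; ring
    rw [hsub, integral_sub (mb_integrable_mul (hD_L2 i t) (hD2' j (t'+1)))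
      (mb_integrable_mul (hD_L2 i t) (hD2' j t')), h1, h2, sub_self]
  have horth' : ∀ (i j : Fin k) (t t' : ℕ), t ≠ t' → ∫ ω, D i t ω * D j t' ω ∂μ = 0 := by
    intro i j t t' hne
    rcases hne.lt_or_gt with h | h
    · exact horth i j t t' h
    · calc ∫ ω, D i t ω * D j t' ω ∂μ = ∫ ω, D j t' ω * D i t ω ∂μ := by
            congr 1; funext ω; ring
        _ = 0 := horth j i t' t h
  -- telescoping
  have htel : ∀ i, (∑ t ∈ Finset.range n, D i t) = f i - fun _ => ∫ ω, f i ω ∂μ := by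
    intro i
    have h1 : (∑ t ∈ Finset.range n, D i t) = μ[f i | G n] - μ[f i | G 0] :=
      Finset.sum_range_sub (fun t => μ[f i | G t]) n
    rw [h1, condExp_of_stronglyMeasurable (hG_le n) ((hf_meas i).mono (hmS_le_Gn i)) (hfi i),
      hG0, condExp_bot]
  have htel' : ∀ i ω, (∑ t ∈ Finset.range n, D i t ω) = f i ω - ∫ ω', f i ω' ∂μ := by
    intro i ω
    have h := congrFun (htel i) ω
    simpa [Finset.sum_apply] using h
  -- per-time bound
  have hDt_bound : ∀ t ∈ Finset.range n,
      ∫ ω, (∑ i : Fin k, D i t ω) ^ 2 ∂μ ≤ (r : ℝ) * ∑ i : Fin k, ∫ ω, D i t ω ^ 2 ∂μ := by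
    intro t ht
    have htn := Finset.mem_range.mp ht
    set jt : Fin n := ⟨t, htn⟩ with hjt
    set T : Finset (Fin k) := Finset.univ.filter (fun i => jt ∈ S i) with hT
    have hvanish : ∀ i, i ∉ T → D i t =ᵐ[μ] 0 := by
      intro i hi
      have hjtS : jt ∉ S i := by simpa [hT] using hi
      have hstep : G (t+1) = G t ⊔ c jt := by
        have hset : {j : Fin n | (j : ℕ) < t + 1} = {j : Fin n | (j : ℕ) < t} ∪ {jt} := by
          ext j
          simp only [Set.mem_setOf_eq, Set.mem_union, Set.mem_singleton_iff,
            Nat.lt_succ_iff_lt_or_eq]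
          constructor
          · rintro (h | h)
            · exact Or.inl h
            · exact Or.inr (Fin.ext h)
          · rintro (h | h)
            · exact Or.inl h
            · exact Or.inr (by rw [h])
        rw [hG]
        simp only []
        rw [hset, iSup_union, iSup_singleton]
      have hdisjset : Disjoint ({j : Fin n | j ∈ S i} ∪ {j : Fin n | (j : ℕ) < t})
          ({jt} : Set (Fin n)) := by
        rw [Set.disjoint_singleton_right]
        rintro (h | h)
        · exact hjtS h
        · exact absurd h (by simp [hjt])
      have hiI : iIndep c μ := by
        rw [iIndepFun_iff_iIndep] at hindep
        exact hindep
      have hindep2 : Indep (mS i ⊔ G t) (c jt) μ := by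
        have h2 := indep_iSup_of_disjoint hc_le hiI hdisjset
        rwa [iSup_union, iSup_singleton] at h2
      have hcond := mb_condexp_sup_indep (hmS_le i) (hc_le jt) (hG_le t) hindep2
        (hf_meas i) (hfi i)
      rw [← hstep] at hcond
      filter_upwards [hcond] with ω hω
      simp only [hD, Pi.sub_apply, Pi.zero_apply]
      rw [hω, sub_self]
    have hall : ∀ᵐ ω ∂μ, ∀ i : Fin k, i ∉ T → D i t ω = 0 := by
      rw [ae_all_iff]
      intro i
      by_cases hi : i ∈ T
      · filter_upwards with ω hω; exact absurd hi hω
      · filter_upwards [hvanish i hi] with ω hω _; exact hω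
    have hae : (fun ω => ∑ i : Fin k, D i t ω) =ᵐ[μ] (fun ω => ∑ i ∈ T, D i t ω) := by
      filter_upwards [hall] with ω hω
      exact (Finset.sum_subset (Finset.subset_univ T) (fun i _ hit => hω i hit)).symm
    calc ∫ ω, (∑ i : Fin k, D i t ω) ^ 2 ∂μ
        = ∫ ω, (∑ i ∈ T, D i t ω) ^ 2 ∂μ :=
          integral_congr_ae (hae.mono fun ω h => congrArg (fun x : ℝ => x ^ 2) h)
      _ ≤ ∫ ω, (T.card : ℝ) * ∑ i ∈ T, D i t ω ^ 2 ∂μ := by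
          refine integral_mono (memLp_finsetSum T (fun i _ => hD_L2 i t)).integrable_sq
            ((integrable_finset_sum T fun i _ => (hD_L2 i t).integrable_sq).const_mul _)
            (fun ω => ?_)
          exact_mod_cast sq_sum_le_card_mul_sum_sq (s := T) (f := fun i => D i t ω)
      _ = (T.card : ℝ) * ∑ i ∈ T, ∫ ω, D i t ω ^ 2 ∂μ := by
          rw [integral_const_mul, integral_finset_sum T fun i _ => (hD_L2 i t).integrable_sq]
      _ ≤ (r : ℝ) * ∑ i : Fin k, ∫ ω, D i t ω ^ 2 ∂μ := by
          have h1 : (T.card : ℝ) ≤ (r : ℝ) := by exact_mod_cast hcover jt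
          have h2 : ∑ i ∈ T, ∫ ω, D i t ω ^ 2 ∂μ ≤ ∑ i : Fin k, ∫ ω, D i t ω ^ 2 ∂μ :=
            Finset.sum_le_sum_of_subset_of_nonneg (Finset.subset_univ T)
              (fun i _ _ => integral_nonneg fun ω => sq_nonneg _)
          have h3 : (0 : ℝ) ≤ ∑ i ∈ T, ∫ ω, D i t ω ^ 2 ∂μ :=
            Finset.sum_nonneg fun i _ => integral_nonneg fun ω => sq_nonneg _
          exact mul_le_mul h1 h2 h3 (by positivity)
  -- variance identity
  have hvar : ∀ (g : Ω → ℝ), MemLp g 2 μ →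
      variance g μ = ∫ ω, (g ω - ∫ ω', g ω' ∂μ) ^ 2 ∂μ := by
    intro g hg
    exact variance_eq_integral hg.aemeasurable
  have hvar_i : ∀ i, variance (f i) μ = ∑ t ∈ Finset.range n, ∫ ω, D i t ω ^ 2 ∂μ := by
    intro i
    rw [hvar (f i) (hL2 i), ← mb_integral_sq_sum (Finset.range n) (D i) (fun t _ => hD_L2 i t)
      (fun t _ t' _ hne => horth' i i t t' hne)]
    congr 1; funext ω; rw [htel' i ω]
  -- the sum
  have hF2 : MemLp (fun ω => ∑ i : Fin k, f i ω) 2 μ :=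
    memLp_finsetSum Finset.univ (fun i _ => hL2 i)
  have hFtel : ∀ ω, (∑ i : Fin k, f i ω) - ∫ ω', (∑ i : Fin k, f i ω') ∂μ
      = ∑ t ∈ Finset.range n, (∑ i : Fin k, D i t ω) := by
    intro ω
    rw [integral_finset_sum _ fun i _ => hfi i, Finset.sum_comm, ← Finset.sum_sub_distrib]
    exact Finset.sum_congr rfl fun i _ => (htel' i ω).symm
  have horthsum : ∀ t ∈ Finset.range n, ∀ t' ∈ Finset.range n, t ≠ t' →
      ∫ ω, (∑ i : Fin k, D i t ω) * (∑ j : Fin k, D j t' ω) ∂μ = 0 := by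
    intro t _ t' _ hne
    have hint : ∀ i j : Fin k, Integrable (fun ω => D i t ω * D j t' ω) μ :=
      fun i j => mb_integrable_mul (hD_L2 i t) (hD_L2 j t')
    calc ∫ ω, (∑ i : Fin k, D i t ω) * (∑ j : Fin k, D j t' ω) ∂μ
        = ∫ ω, ∑ i : Fin k, ∑ j : Fin k, D i t ω * D j t' ω ∂μ := by
          congr 1; funext ω; rw [Finset.sum_mul_sum]
      _ = ∑ i : Fin k, ∑ j : Fin k, ∫ ω, D i t ω * D j t' ω ∂μ := by
          rw [integral_finset_sum _ fun i _ => integrable_finset_sum _ fun j _ => hint i j]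
          exact Finset.sum_congr rfl fun i _ => integral_finset_sum _ fun j _ => hint i j
      _ = 0 := Finset.sum_eq_zero fun i _ => Finset.sum_eq_zero fun j _ => horth' i j t t' hne
  have hvar_F : variance (fun ω => ∑ i : Fin k, f i ω) μ
      = ∑ t ∈ Finset.range n, ∫ ω, (∑ i : Fin k, D i t ω) ^ 2 ∂μ := by
    rw [hvar _ hF2, ← mb_integral_sq_sum (Finset.range n) (fun t ω => ∑ i : Fin k, D i t ω)
      (fun t _ => memLp_finsetSum Finset.univ fun i _ => hD_L2 i t) horthsum]
    congr 1; funext ω; rw [hFtel ω]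
  calc variance (fun ω => ∑ i : Fin k, f i ω) μ
      = ∑ t ∈ Finset.range n, ∫ ω, (∑ i : Fin k, D i t ω) ^ 2 ∂μ := hvar_F
    _ ≤ ∑ t ∈ Finset.range n, ((r : ℝ) * ∑ i : Fin k, ∫ ω, D i t ω ^ 2 ∂μ) :=
        Finset.sum_le_sum hDt_bound
    _ = (r : ℝ) * ∑ i : Fin k, ∑ t ∈ Finset.range n, ∫ ω, D i t ω ^ 2 ∂μ := by
        rw [← Finset.mul_sum, Finset.sum_comm]
    _ = (r : ℝ) * ∑ i : Fin k, variance (f i) μ := by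
        rw [Finset.sum_congr rfl fun i _ => (hvar_i i).symm]

/-- Madiman–Barron: For independent `X₁,…,X_n`, an `r`-cover `S₁,…,S_k` of
`{1,…,n}`, and square-integrable `ψᵢ` depending only on the coordinates in `Sᵢ`,
`Var(Σᵢ ψᵢ(X_{Sᵢ})) ≤ r Σᵢ Var(ψᵢ(X_{Sᵢ}))`. -/
theorem madiman_barron {n k r : ℕ} {Ω : Type*} [MeasurableSpace Ω]
    (μ : Measure Ω) [IsProbabilityMeasure μ]
    (X : Fin n → Ω → ℝ) (hXmeas : ∀ i, Measurable (X i))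
    (hindep : iIndepFun X μ)
    (S : Fin k → Finset (Fin n))
    (hcover : ∀ m : Fin n, (Finset.univ.filter fun i => m ∈ S i).card ≤ r)
    (ψ : ∀ i : Fin k, ({m : Fin n // m ∈ S i} → ℝ) → ℝ)
    (hψ : ∀ i, Measurable (ψ i))
    (hL2 : ∀ i, MemLp (fun ω => ψ i (fun m => X m.1 ω)) 2 μ) :
    variance (fun ω => ∑ i : Fin k, ψ i (fun m => X m.1 ω)) μ ≤
      (r : ℝ) * ∑ i : Fin k, variance (fun ω => ψ i (fun m => X m.1 ω)) μ := by
  exact mb_main μ X hXmeas hindep S hcover ψ hψ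
    (fun i ω => ψ i (fun m => X m.1 ω)) rfl hL2
end

section
/- Let μ be a probability measure on ℝⁿ such that the function t ↦ μ({x : ‖x‖² > t}) satisfies μ({x : ‖x‖² > t}) ≤ C μ({x : ‖x‖² > ct}) for all t ≥ t₀, for some constants 0 < c, C < 1 and t₀ ≥ 0. Then ∫ log(1 + ‖x‖) dμ(x) < ∞. -/
open MeasureTheory Real
open scoped ENNReal

/-- If `μ({‖x‖² > t}) ≤ C μ({‖x‖² > ct})` for all `t ≥ t₀`, with
`0 < c, C < 1`, then `∫ log(1 + ‖x‖) dμ < ∞`. -/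
theorem log_moment_of_tail_estimate {n : ℕ}
    (μ : Measure (EuclideanSpace ℝ (Fin n))) [IsProbabilityMeasure μ]
    (c C t₀ : ℝ) (hc0 : 0 < c) (hc1 : c < 1) (hC0 : 0 < C) (hC1 : C < 1) (ht₀ : 0 ≤ t₀)
    (htail : ∀ t : ℝ, t₀ ≤ t →
      μ {x | t < ‖x‖ ^ 2} ≤ ENNReal.ofReal C * μ {x | c * t < ‖x‖ ^ 2}) :
    Integrable (fun x => log (1 + ‖x‖)) μ := by
  set t₁ : ℝ := max t₀ 1 with ht₁def
  have ht₁1 : (1:ℝ) ≤ t₁ := le_max_right _ _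
  have ht₁0 : (0:ℝ) < t₁ := lt_of_lt_of_le one_pos ht₁1
  have hcne : c ≠ 0 := hc0.ne'
  set A : ℕ → Set (EuclideanSpace ℝ (Fin n)) := fun k => {x | t₁ / c ^ k < ‖x‖ ^ 2} with hAdef
  have hAmeas : ∀ k, MeasurableSet (A k) := by
    intro k
    exact measurableSet_lt measurable_const ((continuous_norm.pow 2).measurable)
  have hA : ∀ k : ℕ, μ (A k) ≤ ENNReal.ofReal C ^ k := by
    intro k
    induction k with
    | zero => simpa using measure_mono (Set.subset_univ (A 0)) |>.trans_eq measure_univ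
    | succ k ih =>
      have hck : c ^ (k+1) ≤ 1 := pow_le_one₀ hc0.le hc1.le
      have hckpos : (0:ℝ) < c ^ (k+1) := pow_pos hc0 _
      have ht : t₀ ≤ t₁ / c ^ (k+1) := by
        have h1 : t₁ ≤ t₁ / c ^ (k+1) := by
          rw [le_div_iff₀ hckpos]; nlinarith
        linarith [le_max_left t₀ (1:ℝ)]
      have h2 := htail _ ht
      have heq : c * (t₁ / c ^ (k+1)) = t₁ / c ^ k := by
        field_simp; ring
      rw [heq] at h2
      calc μ (A (k+1)) ≤ ENNReal.ofReal C * μ (A k) := h2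
        _ ≤ ENNReal.ofReal C * ENNReal.ofReal C ^ k := by gcongr
        _ = ENNReal.ofReal C ^ (k+1) := (pow_succ' _ _).symm
  set a : ℝ := Real.log c⁻¹ / 2 with hadef
  set b : ℝ := Real.log 2 + Real.log t₁ / 2 with hbdef
  have ha : 0 ≤ a := by
    have hlc : Real.log c ≤ 0 := Real.log_nonpos hc0.le hc1.le
    rw [hadef, Real.log_inv]; linarith
  have hb : 0 ≤ b := by
    have h2 : (0:ℝ) ≤ Real.log 2 := Real.log_nonneg one_le_two
    have h3 : (0:ℝ) ≤ Real.log t₁ := Real.log_nonneg ht₁1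
    positivity
  have hpt : ∀ x : EuclideanSpace ℝ (Fin n),
      ENNReal.ofReal (Real.log (1 + ‖x‖)) ≤
        ENNReal.ofReal b + ∑' k, (A k).indicator (fun _ => ENNReal.ofReal a) x := by
    intro x
    have hex : ∃ m : ℕ, ‖x‖ ^ 2 ≤ t₁ / c ^ m := by
      obtain ⟨m, hm⟩ := exists_pow_lt_of_lt_one
        (show (0:ℝ) < t₁ / (‖x‖ ^ 2 + 1) by positivity) hc1
      refine ⟨m, ?_⟩
      have hcm : (0:ℝ) < c ^ m := pow_pos hc0 _
      rw [lt_div_iff₀ (by positivity)] at hm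
      rw [le_div_iff₀ hcm]
      nlinarith [sq_nonneg (‖x‖)]
    have hm := Nat.find_spec hex
    set m := Nat.find hex with hmdef
    have hmin : ∀ k < m, t₁ / c ^ k < ‖x‖ ^ 2 := by
      intro k hk
      have := Nat.find_min hex hk
      linarith [not_le.mp this]
    -- left side bound
    have hcm : (0:ℝ) < c ^ m := pow_pos hc0 _
    have hu1 : (1:ℝ) ≤ t₁ / c ^ m := by
      have : c ^ m ≤ 1 := pow_le_one₀ hc0.le hc1.le
      rw [le_div_iff₀ hcm]; nlinarith
    have hxle : ‖x‖ ≤ Real.sqrt (t₁ / c ^ m) := by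
      have := Real.sqrt_le_sqrt hm
      rwa [Real.sqrt_sq (norm_nonneg x)] at this
    have hs1 : (1:ℝ) ≤ Real.sqrt (t₁ / c ^ m) := by
      rw [show (1:ℝ) = Real.sqrt 1 by simp]
      exact Real.sqrt_le_sqrt hu1
    have key : Real.log (1 + ‖x‖) ≤ b + m * a := by
      have h1 : Real.log (1 + ‖x‖) ≤ Real.log (2 * Real.sqrt (t₁ / c ^ m)) := by
        apply Real.log_le_log (by positivity)
        linarith
      have h2 : Real.log (2 * Real.sqrt (t₁ / c ^ m))
          = Real.log 2 + Real.log (t₁ / c ^ m) / 2 := by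
        rw [Real.log_mul two_ne_zero (by positivity), Real.log_sqrt (by positivity)]
      have h3 : Real.log (t₁ / c ^ m) = Real.log t₁ + m * Real.log c⁻¹ := by
        rw [Real.log_div ht₁0.ne' hcm.ne', Real.log_pow, Real.log_inv]
        push_cast; ring
      rw [h2, h3] at h1
      rw [hbdef, hadef]; linarith
    calc ENNReal.ofReal (Real.log (1 + ‖x‖)) ≤ ENNReal.ofReal (b + m * a) :=
          ENNReal.ofReal_le_ofReal key
      _ = ENNReal.ofReal b + (m : ℝ≥0∞) * ENNReal.ofReal a := by
          rw [ENNReal.ofReal_add hb (by positivity),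
            ENNReal.ofReal_mul (by positivity : (0:ℝ) ≤ (m:ℝ)), ENNReal.ofReal_natCast]
      _ ≤ ENNReal.ofReal b + ∑' k, (A k).indicator (fun _ => ENNReal.ofReal a) x := by
          gcongr
          have hsum : ∑ k ∈ Finset.range m, (A k).indicator (fun _ => ENNReal.ofReal a) x
              = (m : ℝ≥0∞) * ENNReal.ofReal a := by
            rw [Finset.sum_congr rfl (fun k hk => ?_), Finset.sum_const, Finset.card_range,
              nsmul_eq_mul]
            exact Set.indicator_of_mem (show x ∈ A k from hmin k (Finset.mem_range.mp hk))
              (fun _ => ENNReal.ofReal a)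
          rw [← hsum]
          exact ENNReal.sum_le_tsum _
  have hmeasf : AEStronglyMeasurable (fun x : EuclideanSpace ℝ (Fin n) => log (1 + ‖x‖)) μ :=
    (Real.measurable_log.comp ((continuous_const.add continuous_norm).measurable)).aestronglyMeasurable
  refine ⟨hmeasf, ?_⟩
  rw [hasFiniteIntegral_iff_ofReal (ae_of_all _ fun x =>
    Real.log_nonneg (by linarith [norm_nonneg x]))]
  calc ∫⁻ x, ENNReal.ofReal (Real.log (1 + ‖x‖)) ∂μ
      ≤ ∫⁻ x, (ENNReal.ofReal b + ∑' k, (A k).indicator (fun _ => ENNReal.ofReal a) x) ∂μ :=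
        lintegral_mono hpt
    _ = ENNReal.ofReal b + ∑' k, ENNReal.ofReal a * μ (A k) := by
        rw [lintegral_add_left measurable_const, lintegral_const, measure_univ, mul_one,
          lintegral_tsum (fun k => (measurable_const.indicator (hAmeas k)).aemeasurable)]
        congr 1
        refine tsum_congr fun k => ?_
        rw [lintegral_indicator (hAmeas k), setLIntegral_const]
    _ ≤ ENNReal.ofReal b + ∑' k, ENNReal.ofReal a * ENNReal.ofReal C ^ k := by
        gcongr with k
        exact hA k
    _ = ENNReal.ofReal b + ENNReal.ofReal a * (1 - ENNReal.ofReal C)⁻¹ := by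
        rw [ENNReal.tsum_mul_left, ENNReal.tsum_geometric]
    _ < ⊤ := by
        apply ENNReal.add_lt_top.mpr
        constructor
        · exact ENNReal.ofReal_lt_top
        · apply ENNReal.mul_lt_top ENNReal.ofReal_lt_top
          rw [lt_top_iff_ne_top, ne_eq, ENNReal.inv_eq_top]
          simp only [tsub_eq_zero_iff_le, not_le]
          exact ENNReal.ofReal_lt_one.mpr hC1
end
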